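/- Suppose w is a positive C² function on (0, r₀) with w'' + ((n-1)/r + r/2) w' + w/(p-1) + w^p = 0, n ≥ 2, p > 1. If w'(r₁) > 0 for some r₁ ∈ (0, r₀), then w'(r) ≥ w'(r₁) (r₁/r)^{n-1} for all r ∈ (0, r₁], and consequently w cannot extend to a positive solution on all of (0, r₀): the relation ∫_ρ^{r₁} w'(r) dr ≤ w(r₁) fails for small ρ when n ≥ 2. Hence a contradiction, i.e. w' ≤ 0. -/

import Mathlib

open Set Filter

theorem stmt15 (n : ℕ) (hn : 2 ≤ n) (p : ℝ) (hp : 1 < p) (r₀ : ℝ) (hr₀ : 0 < r₀)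
    (w : ℝ → ℝ) (hpos : ∀ r ∈ Ioo (0:ℝ) r₀, 0 < w r)
    (hC2 : ContDiffOn ℝ 2 w (Ioo 0 r₀))
    (heq : ∀ r ∈ Ioo (0:ℝ) r₀, deriv (deriv w) r + (((n : ℝ) - 1) / r + r / 2) * deriv w r
      + w r / (p - 1) + w r ^ p = 0) :
    (∀ r₁ ∈ Ioo (0:ℝ) r₀, 0 < deriv w r₁ →
      ∀ r ∈ Ioc (0:ℝ) r₁, deriv w r₁ * (r₁ / r) ^ (n - 1) ≤ deriv w r) ∧
    ∀ r ∈ Ioo (0:ℝ) r₀, deriv w r ≤ 0 := by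
  obtain ⟨m, rfl⟩ : ∃ m, n = m + 2 := ⟨n - 2, by omega⟩
  have hmn : m + 2 - 1 = m + 1 := rfl
  have hI : IsOpen (Ioo (0:ℝ) r₀) := isOpen_Ioo
  have hwdiff : ∀ x ∈ Ioo (0:ℝ) r₀, DifferentiableAt ℝ w x := fun x hx =>
    (hC2.differentiableOn (by norm_num)).differentiableAt (hI.mem_nhds hx)
  have hd1 : ContDiffOn ℝ 1 (deriv w) (Ioo 0 r₀) := hC2.deriv_of_isOpen hI (by norm_num)
  have hdcont : ContinuousOn (deriv w) (Ioo 0 r₀) :=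
    hC2.continuousOn_deriv_of_isOpen hI (by norm_num)
  have hddiff : ∀ x ∈ Ioo (0:ℝ) r₀, DifferentiableAt ℝ (deriv w) x := fun x hx =>
    (hd1.differentiableOn (by norm_num)).differentiableAt (hI.mem_nhds hx)
  set g : ℝ → ℝ := fun r => r ^ (m + 1) * deriv w r with hg
  have hgcont : ContinuousOn g (Ioo 0 r₀) :=
    (continuous_pow (m+1)).continuousOn.mul hdcont
  have hgdiff : ∀ x ∈ Ioo (0:ℝ) r₀, DifferentiableAt ℝ g x := fun x hx =>
    (differentiable_pow (m+1)).differentiableAt.mul (hddiff x hx)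
  -- derivative of g is nonpositive where w' > 0
  have hgderiv : ∀ x ∈ Ioo (0:ℝ) r₀, 0 < deriv w x → deriv g x ≤ 0 := by
    intro x hx hwx
    have hx0 : (0:ℝ) < x := hx.1
    have hD : HasDerivAt g ((↑(m+1) * x ^ m) * deriv w x + x ^ (m+1) * deriv (deriv w) x) x := by
      simpa using (hasDerivAt_pow (m+1) x).fun_mul ((hddiff x hx).hasDerivAt)
    rw [hD.deriv]
    have he := heq x hx
    have hw2 : deriv (deriv w) x =
        -((((m:ℝ) + 2) - 1) / x + x / 2) * deriv w x - w x / (p - 1) - w x ^ p := by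
      push_cast at he ⊢; linarith
    rw [hw2]
    have hwp : 0 < w x := hpos x hx
    have hrp : 0 < w x ^ p := Real.rpow_pos_of_pos hwp p
    have hfrac : 0 < w x / (p - 1) := div_pos hwp (by linarith)
    have hxm : (0:ℝ) < x ^ (m+1) := pow_pos hx0 _
    have hkey : (↑(m+1) * x ^ m) * deriv w x
        + x ^ (m+1) * (-((((m:ℝ) + 2) - 1) / x + x / 2) * deriv w x - w x / (p - 1) - w x ^ p)
        = x ^ (m+1) * (-(x / 2) * deriv w x - w x / (p - 1) - w x ^ p) := by
      have hxne : x ≠ 0 := ne_of_gt hx0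
      field_simp
      push_cast; ring
    rw [hkey]
    have : -(x / 2) * deriv w x - w x / (p - 1) - w x ^ p ≤ 0 := by nlinarith
    exact mul_nonpos_of_nonneg_of_nonpos (le_of_lt hxm) this
  -- main claim (part 1)
  have key : ∀ r₁ ∈ Ioo (0:ℝ) r₀, 0 < deriv w r₁ →
      ∀ r ∈ Ioc (0:ℝ) r₁, deriv w r₁ * (r₁ / r) ^ (m + 1) ≤ deriv w r := by
    intro r₁ hr₁ hc r hr
    have hr₁0 : (0:ℝ) < r₁ := hr₁.1
    have hr₁r₀ : r₁ < r₀ := hr₁.2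
    -- the set U
    set U : Set ℝ := {r | r ∈ Ioc (0:ℝ) r₁ ∧ ∀ s ∈ Icc r r₁, 0 < deriv w s} with hU
    have hr₁U : r₁ ∈ U := by
      refine ⟨⟨hr₁0, le_refl _⟩, ?_⟩
      intro s hs
      have : s = r₁ := le_antisymm hs.2 hs.1
      rwa [this]
    have hUne : U.Nonempty := ⟨r₁, hr₁U⟩
    have hUbdd : BddBelow U := ⟨0, fun u hu => le_of_lt hu.1.1⟩
    have hsub : ∀ u ∈ U, Icc u r₁ ⊆ Ioo (0:ℝ) r₀ := by
      intro u hu s hs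
      exact ⟨lt_of_lt_of_le hu.1.1 hs.1, lt_of_le_of_lt hs.2 hr₁r₀⟩
    -- antitone: g r₁ ≤ g u for u ∈ U
    have hanti : ∀ u ∈ U, g r₁ ≤ g u := by
      intro u hu
      have hur₁ : u ≤ r₁ := hu.1.2
      have hIcc := hsub u hu
      have hmono : AntitoneOn g (Icc u r₁) := by
        apply antitoneOn_of_deriv_nonpos (convex_Icc u r₁)
          (hgcont.mono hIcc)
        · intro x hx
          rw [interior_Icc] at hx
          exact (hgdiff x (hIcc (Ioo_subset_Icc_self hx))).differentiableWithinAt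
        · intro x hx
          rw [interior_Icc] at hx
          have hx' := hIcc (Ioo_subset_Icc_self hx)
          exact hgderiv x hx' (hu.2 x (Ioo_subset_Icc_self hx))
      exact hmono (left_mem_Icc.2 hur₁) (right_mem_Icc.2 hur₁) hur₁
    have ha0 : (0:ℝ) ≤ sInf U := le_csInf hUne (fun u hu => le_of_lt hu.1.1)
    have har₁ : sInf U ≤ r₁ := csInf_le hUbdd hr₁U
    -- everything above sInf U is in U
    have habove : ∀ s ∈ Ioc (sInf U) r₁, s ∈ U := by
      intro s hs
      obtain ⟨u, huU, hus⟩ := exists_lt_of_csInf_lt hUne hs.1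
      refine ⟨⟨lt_trans huU.1.1 hus, hs.2⟩, fun t ht => huU.2 t ⟨le_trans (le_of_lt hus) ht.1, ht.2⟩⟩
    have hainf : sInf U = 0 := by
      by_contra ha
      have ha' : 0 < sInf U := lt_of_le_of_ne ha0 (Ne.symm ha)
      set a := sInf U with hadef
      have haIoo : a ∈ Ioo (0:ℝ) r₀ := ⟨ha', lt_of_le_of_lt har₁ hr₁r₀⟩
      -- g r₁ ≤ g a
      have hga : g r₁ ≤ g a := by
        rcases eq_or_lt_of_le har₁ with heq' | hlt
        · rw [heq']
        · have hca : ContinuousAt g a := hgcont.continuousAt (hI.mem_nhds haIoo)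
          have htend : Tendsto g (nhdsWithin a (Ioi a)) (nhds (g a)) :=
            hca.tendsto.mono_left nhdsWithin_le_nhds
          refine ge_of_tendsto htend ?_
          filter_upwards [Ioc_mem_nhdsGT_of_mem (⟨le_refl a, hlt⟩ : a ∈ Ico a r₁)] with s hs
          exact hanti s (habove s hs)
      have hgr₁pos : 0 < g r₁ := mul_pos (pow_pos hr₁0 _) hc
      have hwa : 0 < deriv w a := by
        by_contra hwa'
        push_neg at hwa'
        have hga0 : g a ≤ 0 := mul_nonpos_of_nonneg_of_nonpos (pow_pos ha' (m+1)).le hwa'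
        linarith
      -- w' positive in a neighborhood of a
      have hca : ContinuousAt (deriv w) a := hdcont.continuousAt (hI.mem_nhds haIoo)
      have hev : ∀ᶠ x in nhds a, 0 < deriv w x := hca.tendsto.eventually (eventually_gt_nhds hwa)
      obtain ⟨ε, hε, hball⟩ := Metric.eventually_nhds_iff.1 hev
      set r' := max (a - ε/2) (a/2) with hr'def
      have hr'pos : 0 < r' := lt_of_lt_of_le (by linarith) (le_max_right _ _)
      have hr'lt : r' < a := max_lt (by linarith) (by linarith)
      have hr'U : r' ∈ U := by
        refine ⟨⟨hr'pos, le_trans (le_of_lt hr'lt) har₁⟩, ?_⟩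
        intro t ht
        rcases le_or_gt t a with hta | hta
        · apply hball
          rw [Real.dist_eq, abs_of_nonpos (by linarith)]
          have : a - ε/2 ≤ r' := le_max_left _ _
          have := ht.1
          simp only [neg_sub]
          linarith
        · exact (habove t ⟨hta, ht.2⟩).2 t ⟨le_refl t, ht.2⟩
      have := csInf_le hUbdd hr'U
      linarith
    -- conclude
    have hrU : r ∈ U := by
      rcases eq_or_lt_of_le hr.2 with heq' | hlt
      · rw [heq']; exact hr₁U
      · exact habove r ⟨by rw [hainf]; exact hr.1, hr.2⟩
    have hgr : g r₁ ≤ g r := hanti r hrU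
    have hr0 : (0:ℝ) < r := hr.1
    have hrpow : (0:ℝ) < r ^ (m+1) := pow_pos hr0 _
    rw [div_pow, ← mul_div_assoc, div_le_iff₀ hrpow]
    calc deriv w r₁ * r₁ ^ (m+1) = g r₁ := by rw [hg]; ring
    _ ≤ g r := hgr
    _ = deriv w r * r ^ (m+1) := by rw [hg]; ring
  refine ⟨key, ?_⟩
  intro r₁ hr₁
  by_contra hcon
  push_neg at hcon
  set c := deriv w r₁ with hcdef
  have hK : 0 < c * r₁ ^ (m+1) := mul_pos hcon (pow_pos hr₁.1 _)
  set K := c * r₁ ^ (m+1) with hKdef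
  set s := min r₁ 1 with hsdef
  have hs0 : 0 < s := lt_min hr₁.1 one_pos
  have hsr₁ : s ≤ r₁ := min_le_left _ _
  have hs1 : s ≤ 1 := min_le_right _ _
  have hsIoo : s ∈ Ioo (0:ℝ) r₀ := ⟨hs0, lt_of_le_of_lt hsr₁ hr₁.2⟩
  have hbound : ∀ x ∈ Ioc (0:ℝ) s, K / x ≤ deriv w x := by
    intro x hx
    have hx0 : 0 < x := hx.1
    have hxr₁ : x ≤ r₁ := le_trans hx.2 hsr₁
    have h1 := key r₁ hr₁ hcon x ⟨hx0, hxr₁⟩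
    have he : c * (r₁ / x) ^ (m+1) = K / x ^ (m+1) := by
      rw [hKdef, div_pow]; ring
    have hxm : x ^ (m+1) ≤ x := by
      calc x ^ (m+1) = x * x ^ m := by ring
      _ ≤ x * 1 := mul_le_mul_of_nonneg_left (pow_le_one₀ hx0.le (le_trans hx.2 hs1)) hx0.le
      _ = x := mul_one x
    have h2 : K / x ≤ K / x ^ (m+1) := div_le_div_of_nonneg_left hK.le (pow_pos hx0 _) hxm
    rw [he] at h1
    linarith
  set ρ := s * Real.exp (-((w s + 1)/K)) with hρdef
  have hρ0 : 0 < ρ := mul_pos hs0 (Real.exp_pos _)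
  have hρs : ρ < s := by
    have h1 : Real.exp (-((w s + 1)/K)) < 1 := by
      rw [Real.exp_lt_one_iff]
      have hws : 0 < w s := hpos s hsIoo
      have : 0 < (w s + 1)/K := div_pos (by linarith) hK
      linarith
    calc ρ = s * Real.exp (-((w s + 1)/K)) := rfl
    _ < s * 1 := by exact mul_lt_mul_of_pos_left h1 hs0
    _ = s := mul_one s
  have hIccsub : Icc ρ s ⊆ Ioo (0:ℝ) r₀ := fun x hx =>
    ⟨lt_of_lt_of_le hρ0 hx.1, lt_of_le_of_lt hx.2 hsIoo.2⟩
  have huIcc : uIcc ρ s = Icc ρ s := uIcc_of_le hρs.le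
  have hinteg : IntervalIntegrable (deriv w) MeasureTheory.volume ρ s := by
    apply ContinuousOn.intervalIntegrable
    rw [huIcc]; exact hdcont.mono hIccsub
  have hFTC : ∫ y in ρ..s, deriv w y = w s - w ρ := by
    apply intervalIntegral.integral_eq_sub_of_hasDerivAt
    · intro x hx
      rw [huIcc] at hx
      exact (hwdiff x (hIccsub hx)).hasDerivAt
    · exact hinteg
  have h0uIcc : (0:ℝ) ∉ uIcc ρ s := by
    rw [huIcc]; intro h; exact absurd h.1 (not_le.2 hρ0)
  have hKint : ∫ y in ρ..s, K / y = K * Real.log (s / ρ) := by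
    calc ∫ y in ρ..s, K / y = ∫ y in ρ..s, K * (1 / y) := by
          congr 1; funext y; rw [mul_one_div]
    _ = K * ∫ y in ρ..s, 1 / y := intervalIntegral.integral_const_mul _ _
    _ = K * Real.log (s / ρ) := by rw [integral_one_div h0uIcc]
  have hKi : IntervalIntegrable (fun y => K / y) MeasureTheory.volume ρ s := by
    apply ContinuousOn.intervalIntegrable
    rw [huIcc]
    exact ContinuousOn.div continuousOn_const continuousOn_id
      (fun x hx => ne_of_gt (lt_of_lt_of_le hρ0 hx.1))
  have hmono := intervalIntegral.integral_mono_on hρs.le hKi hinteg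
    (fun x hx => hbound x ⟨lt_of_lt_of_le hρ0 hx.1, hx.2⟩)
  have hlog : Real.log (s / ρ) = (w s + 1)/K := by
    have hse : s / ρ = Real.exp ((w s + 1)/K) := by
      rw [hρdef, Real.exp_neg]
      field_simp
    rw [hse, Real.log_exp]
  rw [hFTC, hKint, hlog, mul_div_cancel₀ _ (ne_of_gt hK)] at hmono
  have hwρ : 0 < w ρ := hpos ρ ⟨hρ0, lt_trans hρs hsIoo.2⟩
  linarith
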